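/- Let G = (V, E) be a finite graph with antisymmetric real weight function w on directed edges, a distinguished subset ∂̄ ⊂ V, such that (i) every vertex v outside ∂̄ has integer flux fl(v) = ∑_{(a,v)∈E} w(a,v) ∈ ℤ, (ii) the total flux through ∂̄ is zero, (iii) at each vertex outside ∂̄ all incident weights w(a,v) have the same sign, and (iv) the total absolute weight of edges incident to ∂̄ is strictly less than 1. Then there exists a flow f on G (antisymmetric, |f(a,b)| ≤ |w(a,b)|, conserving flux at all vertices outside ∂̄, matching signs of w on boundary edges) with f(a,b) = w(a,b) on every edge incident to ∂̄. -/

import Mathlib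

open Finset
set_option linter.unusedSectionVars false
set_option maxHeartbeats 1000000

variable {V : Type} [Fintype V] [DecidableEq V]

noncomputable def sig (B : Finset V) (w : V → V → ℝ) : V → V → ℝ :=
  fun a b => if a ∈ B ∨ b ∈ B then 0 else |w a b|

noncomputable def DD (B : Finset V) (w : V → V → ℝ) : V → ℝ :=
  fun v => if v ∈ B then 0 else -∑ a ∈ B, w a v

lemma antisym_sum_zero' (S : Finset V) (w : V → V → ℝ) (h : ∀ a b, w a b = -w b a) :
    ∑ a ∈ S, ∑ b ∈ S, w a b = 0 := by
  have h2 : ∑ a ∈ S, ∑ b ∈ S, w a b = ∑ a ∈ S, ∑ b ∈ S, -w a b := by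
    rw [Finset.sum_comm]
    exact Finset.sum_congr rfl fun a _ => Finset.sum_congr rfl fun b _ => h b a
  simp only [Finset.sum_neg_distrib] at h2
  linarith

lemma sum_S_zero (B : Finset V) (w : V → V → ℝ)
    (hanti : ∀ a b, w a b = -w b a)
    (hzero : (∑ v ∈ B, ∑ a, w a v) = 0) :
    ∑ v ∈ Bᶜ, (∑ a ∈ B, w a v) = 0 := by
  have h1 : ∑ v ∈ Bᶜ, ∑ a ∈ B, w a v = ∑ a ∈ B, ∑ v ∈ Bᶜ, w a v := Finset.sum_comm
  have h2 : ∀ a, ∑ v ∈ Bᶜ, w a v = ∑ v, w a v - ∑ v ∈ B, w a v := by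
    intro a
    rw [← Finset.sum_add_sum_compl B (w a)]; ring
  have h3 : ∑ a ∈ B, ∑ v ∈ B, w a v = 0 := antisym_sum_zero' B w hanti
  have h4 : ∑ a ∈ B, ∑ v, w a v = - ∑ v ∈ B, ∑ a, w a v := by
    rw [← Finset.sum_neg_distrib]
    have : ∀ v ∈ B, -∑ a, w a v = ∑ a, w v a := by
      intro v _
      rw [← Finset.sum_neg_distrib]
      exact Finset.sum_congr rfl fun a _ => by rw [hanti v a]
    rw [Finset.sum_congr rfl this]
  rw [h1, Finset.sum_congr rfl (fun a _ => h2 a), Finset.sum_sub_distrib, h3, h4, hzero]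
  ring

lemma cut_lemma (B : Finset V) (w : V → V → ℝ)
    (hanti : ∀ a b, w a b = -w b a)
    (hint : ∀ v ∉ B, ∃ m : ℤ, (∑ a, w a v) = (m : ℝ))
    (hzero : (∑ v ∈ B, ∑ a, w a v) = 0)
    (hsmall : (∑ a ∈ B, ∑ b, |w a b|) < 1)
    (T : Finset V) :
    ∑ v ∈ T, DD B w v ≤ ∑ b ∈ T, ∑ a ∈ Tᶜ, sig B w a b := by
  classical
  set T' : Finset V := T \ B with hT'
  set S : V → ℝ := fun v => ∑ a ∈ B, w a v with hS
  -- LHS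
  have hT'sub : T' ⊆ T := Finset.sdiff_subset
  have hLHS : ∑ v ∈ T, DD B w v = ∑ v ∈ T', -(S v) := by
    rw [← Finset.sum_subset hT'sub (by
      intro v hv hv'
      have : v ∈ B := by
        by_contra hb
        exact hv' (Finset.mem_sdiff.mpr ⟨hv, hb⟩)
      simp [DD, this])]
    refine Finset.sum_congr rfl fun v hv => ?_
    have hvB : v ∉ B := (Finset.mem_sdiff.mp hv).2
    simp [DD, hvB, hS]
  -- RHS
  set C : ℝ := ∑ v ∈ T', ∑ a ∈ Tᶜ \ B, |w a v| with hC
  have hRHS : ∑ b ∈ T, ∑ a ∈ Tᶜ, sig B w a b = C := by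
    rw [← Finset.sum_subset hT'sub (by
      intro v hv hv'
      have hvB : v ∈ B := by
        by_contra hb
        exact hv' (Finset.mem_sdiff.mpr ⟨hv, hb⟩)
      exact Finset.sum_eq_zero fun a _ => by simp [sig, hvB])]
    refine Finset.sum_congr rfl fun v hv => ?_
    have hvB : v ∉ B := (Finset.mem_sdiff.mp hv).2
    rw [← Finset.sum_subset (Finset.sdiff_subset : Tᶜ \ B ⊆ Tᶜ) (by
      intro a ha ha'
      have haB : a ∈ B := by
        by_contra hb
        exact ha' (Finset.mem_sdiff.mpr ⟨ha, hb⟩)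
      simp [sig, haB])]
    refine Finset.sum_congr rfl fun a ha => ?_
    have haB : a ∉ B := (Finset.mem_sdiff.mp ha).2
    simp [sig, haB, hvB]
  -- partition of univ
  have hpart : ∀ v, ∑ a, w a v
      = (∑ a ∈ B, w a v) + (∑ a ∈ T', w a v) + (∑ a ∈ Tᶜ \ B, w a v) := by
    intro v
    have hd1 : Disjoint B T' := by
      rw [Finset.disjoint_right]; intro a ha; exact (Finset.mem_sdiff.mp ha).2
    have hd2 : Disjoint (B ∪ T') (Tᶜ \ B) := by
      rw [Finset.disjoint_left]; intro a ha ha2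
      rcases Finset.mem_union.mp ha with h | h
      · exact (Finset.mem_sdiff.mp ha2).2 h
      · exact (Finset.mem_compl.mp (Finset.mem_sdiff.mp ha2).1) (hT'sub h)
    have hU : (B ∪ T') ∪ (Tᶜ \ B) = Finset.univ := by
      ext x
      simp only [Finset.mem_union, Finset.mem_sdiff, Finset.mem_compl, Finset.mem_univ,
        iff_true, hT']
      by_cases hb : x ∈ B
      · exact Or.inl (Or.inl hb)
      · by_cases ht : x ∈ T
        · exact Or.inl (Or.inr ⟨ht, hb⟩)
        · exact Or.inr ⟨ht, hb⟩
    rw [← hU, Finset.sum_union hd2, Finset.sum_union hd1]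
  -- integer k
  choose M hM using hint
  set k : ℤ := ∑ v ∈ T'.attach, M v.1 ((Finset.mem_sdiff.mp v.2).2) with hk
  set A : ℝ := ∑ v ∈ T', S v with hA
  set W : ℝ := ∑ v ∈ T', ∑ a ∈ Tᶜ \ B, w a v with hW
  have hkR : (k : ℝ) = A + W := by
    have h0 : ∑ v ∈ T', ∑ a ∈ T', w a v = 0 := by
      rw [Finset.sum_comm]; exact antisym_sum_zero' T' w hanti
    have : (k : ℝ) = ∑ v ∈ T'.attach, (M v.1 ((Finset.mem_sdiff.mp v.2).2) : ℝ) := by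
      push_cast [hk]; rfl
    rw [this]
    have : ∑ v ∈ T'.attach, (M v.1 ((Finset.mem_sdiff.mp v.2).2) : ℝ)
        = ∑ v ∈ T'.attach, (∑ a, w a v.1) := by
      refine Finset.sum_congr rfl fun v _ => ?_
      rw [← hM v.1 ((Finset.mem_sdiff.mp v.2).2)]
    rw [this, Finset.sum_attach T' (fun v => ∑ a, w a v),
      Finset.sum_congr rfl (fun v _ => hpart v), Finset.sum_add_distrib,
      Finset.sum_add_distrib, h0]
    simp [hA, hW, hS]
  -- |W| ≤ C
  have hWC : |W| ≤ C := by
    calc |W| ≤ ∑ v ∈ T', |∑ a ∈ Tᶜ \ B, w a v| := Finset.abs_sum_le_sum_abs _ _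
    _ ≤ C := Finset.sum_le_sum fun v _ => Finset.abs_sum_le_sum_abs _ _
  -- total boundary small
  have habsS : ∑ v ∈ Bᶜ, |S v| < 1 := by
    have h1 : ∑ v ∈ Bᶜ, |S v| ≤ ∑ v ∈ Bᶜ, ∑ a ∈ B, |w a v| :=
      Finset.sum_le_sum fun v _ => Finset.abs_sum_le_sum_abs _ _
    have h2 : ∑ v ∈ Bᶜ, ∑ a ∈ B, |w a v| = ∑ a ∈ B, ∑ v ∈ Bᶜ, |w a v| := Finset.sum_comm
    have h3 : ∑ a ∈ B, ∑ v ∈ Bᶜ, |w a v| ≤ ∑ a ∈ B, ∑ v, |w a v| := by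
      refine Finset.sum_le_sum fun a _ => ?_
      exact Finset.sum_le_sum_of_subset_of_nonneg (Finset.subset_univ _)
        (fun v _ _ => abs_nonneg _)
    linarith
  -- A + A' = 0
  have hT'Bc : T' ⊆ Bᶜ := by
    intro v hv; exact Finset.mem_compl.mpr (Finset.mem_sdiff.mp hv).2
  have hsplit : ∑ v ∈ Bᶜ \ T', S v + A = ∑ v ∈ Bᶜ, S v := Finset.sum_sdiff hT'Bc
  have hA' : A = - ∑ v ∈ Bᶜ \ T', S v := by
    have h0 : ∑ v ∈ Bᶜ, S v = 0 := sum_S_zero B w hanti hzero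
    rw [h0] at hsplit
    linarith
  have habs1 : |A| ≤ ∑ v ∈ T', |S v| := Finset.abs_sum_le_sum_abs _ _
  have habs2 : |A| ≤ ∑ v ∈ Bᶜ \ T', |S v| := by
    rw [hA', abs_neg]; exact Finset.abs_sum_le_sum_abs _ _
  have habs3 : ∑ v ∈ T', |S v| + ∑ v ∈ Bᶜ \ T', |S v| = ∑ v ∈ Bᶜ, |S v| := by
    rw [add_comm]; exact Finset.sum_sdiff hT'Bc
  have hAhalf : |A| < 1/2 := by linarith
  rw [hLHS, hRHS]
  have hLHSA : ∑ v ∈ T', -(S v) = -A := by rw [hA, Finset.sum_neg_distrib]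
  rw [hLHSA]
  by_cases hk0 : k = 0
  · -- -A = W
    have : -A = W := by rw [hk0] at hkR; push_cast at hkR; linarith
    rw [this]
    exact le_trans (le_abs_self W) hWC
  · have h1 : (1 : ℝ) ≤ |(k : ℝ)| := by
      rw [← Int.cast_abs]
      exact_mod_cast Int.one_le_abs hk0
    have h2 : |(k : ℝ)| ≤ |A| + |W| := by rw [hkR]; exact abs_add_le _ _
    have h3 : -A ≤ |A| := neg_abs_le A |>.trans (le_abs_self A) |> fun _ => neg_le_abs A
    linarith

noncomputable def RR (B : Finset V) (w : V → V → ℝ) (y : V → ℝ) : ℝ :=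
  (1/2) * ∑ a, ∑ b, sig B w a b * |y b - y a|

lemma sig_symm (B : Finset V) (w : V → V → ℝ) (hanti : ∀ a b, w a b = -w b a) (a b : V) :
    sig B w a b = sig B w b a := by
  unfold sig
  rw [hanti a b, abs_neg]
  congr 1
  simp [or_comm]

lemma sig_ind_sum (B : Finset V) (w : V → V → ℝ) (hanti : ∀ a b, w a b = -w b a)
    (T : Finset V) :
    ∑ a, ∑ b, sig B w a b * |(if b ∈ T then (1:ℝ) else 0) - (if a ∈ T then 1 else 0)|
      = 2 * ∑ b ∈ T, ∑ a ∈ Tᶜ, sig B w a b := by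
  classical
  have hsplit : ∀ f : V → ℝ, ∑ a, f a = ∑ a ∈ T, f a + ∑ a ∈ Tᶜ, f a :=
    fun f => (Finset.sum_add_sum_compl T f).symm
  rw [hsplit]
  have h1 : ∀ a ∈ T, (∑ b, sig B w a b * |(if b ∈ T then (1:ℝ) else 0) - (if a ∈ T then 1 else 0)|)
      = ∑ b ∈ Tᶜ, sig B w a b := by
    intro a ha
    rw [hsplit]
    have e1 : ∑ b ∈ T, sig B w a b * |(if b ∈ T then (1:ℝ) else 0) - (if a ∈ T then 1 else 0)| = 0 :=
      Finset.sum_eq_zero fun b hb => by simp [ha, hb]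
    have e2 : ∑ b ∈ Tᶜ, sig B w a b * |(if b ∈ T then (1:ℝ) else 0) - (if a ∈ T then 1 else 0)|
        = ∑ b ∈ Tᶜ, sig B w a b := by
      refine Finset.sum_congr rfl fun b hb => ?_
      have hb' : b ∉ T := Finset.mem_compl.mp hb
      simp [ha, hb']
    rw [e1, e2, zero_add]
  have h2 : ∀ a ∈ Tᶜ, (∑ b, sig B w a b * |(if b ∈ T then (1:ℝ) else 0) - (if a ∈ T then 1 else 0)|)
      = ∑ b ∈ T, sig B w a b := by
    intro a ha
    have ha' : a ∉ T := Finset.mem_compl.mp ha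
    rw [hsplit]
    have e1 : ∑ b ∈ T, sig B w a b * |(if b ∈ T then (1:ℝ) else 0) - (if a ∈ T then 1 else 0)|
        = ∑ b ∈ T, sig B w a b := by
      refine Finset.sum_congr rfl fun b hb => ?_
      simp [ha', hb]
    have e2 : ∑ b ∈ Tᶜ, sig B w a b * |(if b ∈ T then (1:ℝ) else 0) - (if a ∈ T then 1 else 0)| = 0 :=
      Finset.sum_eq_zero fun b hb => by simp [ha', Finset.mem_compl.mp hb]
    rw [e1, e2, add_zero]
  rw [Finset.sum_congr rfl h1, Finset.sum_congr rfl h2]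
  have h3 : ∑ a ∈ T, ∑ b ∈ Tᶜ, sig B w a b = ∑ b ∈ T, ∑ a ∈ Tᶜ, sig B w a b := by
    calc ∑ a ∈ T, ∑ b ∈ Tᶜ, sig B w a b
        = ∑ a ∈ T, ∑ b ∈ Tᶜ, sig B w b a :=
          Finset.sum_congr rfl fun a _ => Finset.sum_congr rfl fun b _ => sig_symm B w hanti a b
      _ = ∑ b ∈ T, ∑ a ∈ Tᶜ, sig B w a b := rfl
  have h4 : ∑ a ∈ Tᶜ, ∑ b ∈ T, sig B w a b = ∑ b ∈ T, ∑ a ∈ Tᶜ, sig B w a b :=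
    Finset.sum_comm
  rw [h3, h4]; ring

lemma sig_nonneg (B : Finset V) (w : V → V → ℝ) (a b : V) : 0 ≤ sig B w a b := by
  unfold sig; split <;> simp [abs_nonneg]

lemma sum_D_zero (B : Finset V) (w : V → V → ℝ)
    (hanti : ∀ a b, w a b = -w b a)
    (hzero : (∑ v ∈ B, ∑ a, w a v) = 0) :
    ∑ v, DD B w v = 0 := by
  rw [← Finset.sum_add_sum_compl B (DD B w)]
  have h1 : ∑ v ∈ B, DD B w v = 0 := Finset.sum_eq_zero fun v hv => by simp [DD, hv]
  have h2 : ∑ v ∈ Bᶜ, DD B w v = - ∑ v ∈ Bᶜ, ∑ a ∈ B, w a v := by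
    rw [← Finset.sum_neg_distrib]
    refine Finset.sum_congr rfl fun v hv => ?_
    simp only [Finset.mem_compl] at hv
    simp [DD, hv]
  rw [h1, h2, sum_S_zero B w hanti hzero]; ring

lemma key_ineq (B : Finset V) (w : V → V → ℝ)
    (hanti : ∀ a b, w a b = -w b a)
    (hint : ∀ v ∉ B, ∃ m : ℤ, (∑ a, w a v) = (m : ℝ))
    (hzero : (∑ v ∈ B, ∑ a, w a v) = 0)
    (hsmall : (∑ a ∈ B, ∑ b, |w a b|) < 1) :
    ∀ y : V → ℝ, ∑ v, DD B w v * y v ≤ RR B w y := by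
  classical
  suffices h : ∀ n : ℕ, ∀ y : V → ℝ, (Finset.univ.image y).card ≤ n →
      ∑ v, DD B w v * y v ≤ RR B w y by
    intro y; exact h _ y le_rfl
  intro n
  induction n with
  | zero =>
    intro y hy
    have h0 : Finset.univ.image y = ∅ := Finset.card_eq_zero.mp (Nat.le_zero.mp hy)
    have h : (Finset.univ : Finset V) = ∅ := Finset.image_eq_empty.mp h0
    unfold RR
    rw [h]
    simp
  | succ n IH =>
    intro y hy
    by_cases hle : (Finset.univ.image y).card ≤ n
    · exact IH y hle
    push_neg at hle
    have hcard : (Finset.univ.image y).card = n + 1 := le_antisymm hy hle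
    have hne : (Finset.univ.image y).Nonempty := Finset.card_pos.mp (by omega)
    set t0 := (Finset.univ.image y).min' hne with ht0def
    have ht0 : ∀ v, t0 ≤ y v :=
      fun v => Finset.min'_le _ _ (Finset.mem_image_of_mem y (Finset.mem_univ v))
    by_cases hone : ∀ v, y v = t0
    · have hDzero := sum_D_zero B w hanti hzero
      have hL : ∑ v, DD B w v * y v = 0 := by
        calc ∑ v, DD B w v * y v = ∑ v, DD B w v * t0 :=
               Finset.sum_congr rfl fun v _ => by rw [hone v]
          _ = (∑ v, DD B w v) * t0 := by rw [Finset.sum_mul]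
          _ = 0 := by rw [hDzero]; ring
      rw [hL]
      unfold RR
      have hnn : 0 ≤ ∑ a, ∑ b, sig B w a b * |y b - y a| :=
        Finset.sum_nonneg fun a _ => Finset.sum_nonneg fun b _ =>
          mul_nonneg (sig_nonneg B w a b) (abs_nonneg _)
      linarith
    · push_neg at hone
      obtain ⟨v0, hv0⟩ := hone
      have hne2 : ((Finset.univ.image y).erase t0).Nonempty :=
        ⟨y v0, Finset.mem_erase.mpr ⟨hv0, Finset.mem_image_of_mem y (Finset.mem_univ v0)⟩⟩
      set t1 := ((Finset.univ.image y).erase t0).min' hne2 with ht1def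
      have ht1I : t1 ∈ (Finset.univ.image y).erase t0 := Finset.min'_mem _ _
      have ht01 : t0 < t1 := by
        have h1 : t0 ≤ t1 := Finset.min'_le _ _ (Finset.mem_of_mem_erase ht1I)
        exact lt_of_le_of_ne h1 (Ne.symm (Finset.mem_erase.mp ht1I).1)
      set s := t1 - t0 with hsdef
      have hs : 0 < s := by rw [hsdef]; linarith
      set T : Finset V := Finset.univ.filter (fun v => y v ≠ t0) with hTdef
      set y' : V → ℝ := fun v => if y v = t0 then t1 else y v with hy'def
      have hget1 : ∀ v, y v ≠ t0 → t1 ≤ y v := fun v hv =>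
        Finset.min'_le _ _ (Finset.mem_erase.mpr ⟨hv, Finset.mem_image_of_mem y (Finset.mem_univ v)⟩)
      have himg : Finset.univ.image y' ⊆ (Finset.univ.image y).erase t0 := by
        intro x hx
        obtain ⟨v, -, rfl⟩ := Finset.mem_image.mp hx
        by_cases h : y v = t0
        · have hh : y' v = t1 := by simp only [hy'def, if_pos h]
          rw [hh]; exact ht1I
        · have hh : y' v = y v := by simp only [hy'def, if_neg h]
          rw [hh]
          exact Finset.mem_erase.mpr ⟨h, Finset.mem_image_of_mem y (Finset.mem_univ v)⟩
      have hcard' : (Finset.univ.image y').card ≤ n := by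
        have h1 := Finset.card_le_card himg
        rw [Finset.card_erase_of_mem (Finset.min'_mem _ _), hcard] at h1
        omega
      have hIH := IH y' hcard'
      -- LHS decomposition
      have hLdec : ∑ v, DD B w v * y v
          = ∑ v, DD B w v * y' v - s * ∑ v, DD B w v + s * ∑ v ∈ T, DD B w v := by
        have h1 : ∀ v, DD B w v * y v
            = DD B w v * y' v - s * DD B w v
              + s * (DD B w v * (if v ∈ T then (1:ℝ) else 0)) := by
          intro v
          by_cases h : y v = t0
          · have hvT : v ∉ T := by simp [hTdef, h]
            have hy'v : y' v = t1 := by simp only [hy'def, if_pos h]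
            rw [h, hy'v, if_neg hvT, hsdef]; ring
          · have hvT : v ∈ T := by simp [hTdef, h]
            have hy'v : y' v = y v := by simp only [hy'def, if_neg h]
            rw [hy'v, if_pos hvT]; ring
        rw [Finset.sum_congr rfl fun v _ => h1 v, Finset.sum_add_distrib,
          Finset.sum_sub_distrib, ← Finset.mul_sum, ← Finset.mul_sum]
        congr 1
        congr 1
        rw [hTdef, Finset.sum_filter]
        refine Finset.sum_congr rfl fun v _ => ?_
        by_cases h : y v = t0
        · have hvT : v ∉ T := by simp [hTdef, h]
          simp [h, hTdef]
        · have hvT : v ∈ T := by simp [hTdef, h]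
          simp [h, hTdef]
      -- RR decomposition
      have hpt : ∀ a b, |y b - y a|
          = |y' b - y' a| + s * |(if b ∈ T then (1:ℝ) else 0) - (if a ∈ T then 1 else 0)| := by
        intro a b
        by_cases ha : y a = t0 <;> by_cases hb : y b = t0
        · have haT : a ∉ T := by simp [hTdef, ha]
          have hbT : b ∉ T := by simp [hTdef, hb]
          have h1 : y' a = t1 := by simp only [hy'def, if_pos ha]
          have h2 : y' b = t1 := by simp only [hy'def, if_pos hb]
          rw [ha, hb, h1, h2, if_neg haT, if_neg hbT]
          simp
        · have haT : a ∉ T := by simp [hTdef, ha]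
          have hbT : b ∈ T := by simp [hTdef, hb]
          have h1 : y' a = t1 := by simp only [hy'def, if_pos ha]
          have h2 : y' b = y b := by simp only [hy'def, if_neg hb]
          have h3 : t1 ≤ y b := hget1 b hb
          rw [ha, h1, h2, if_neg haT, if_pos hbT, hsdef]
          rw [abs_of_nonneg (by linarith), abs_of_nonneg (by linarith),
            abs_of_nonneg (by norm_num : (0:ℝ) ≤ 1 - 0)]
          ring
        · have haT : a ∈ T := by simp [hTdef, ha]
          have hbT : b ∉ T := by simp [hTdef, hb]
          have h1 : y' a = y a := by simp only [hy'def, if_neg ha]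
          have h2 : y' b = t1 := by simp only [hy'def, if_pos hb]
          have h3 : t1 ≤ y a := hget1 a ha
          rw [hb, h1, h2, if_pos haT, if_neg hbT, hsdef]
          rw [abs_of_nonpos (by linarith), abs_of_nonpos (by linarith),
            abs_of_nonpos (by norm_num : (0:ℝ) - 1 ≤ 0)]
          ring
        · have haT : a ∈ T := by simp [hTdef, ha]
          have hbT : b ∈ T := by simp [hTdef, hb]
          have h1 : y' a = y a := by simp only [hy'def, if_neg ha]
          have h2 : y' b = y b := by simp only [hy'def, if_neg hb]
          rw [h1, h2, if_pos haT, if_pos hbT]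
          simp
      have hRdec : RR B w y = RR B w y' + s * ∑ b ∈ T, ∑ a ∈ Tᶜ, sig B w a b := by
        unfold RR
        have h1 : ∀ a b, sig B w a b * |y b - y a|
            = sig B w a b * |y' b - y' a|
              + s * (sig B w a b
                * |(if b ∈ T then (1:ℝ) else 0) - (if a ∈ T then 1 else 0)|) := by
          intro a b; rw [hpt a b]; ring
        calc (1/2) * ∑ a, ∑ b, sig B w a b * |y b - y a|
            = (1/2) * ∑ a, ∑ b, (sig B w a b * |y' b - y' a|
              + s * (sig B w a b
                * |(if b ∈ T then (1:ℝ) else 0) - (if a ∈ T then 1 else 0)|)) := by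
              congr 1
              exact Finset.sum_congr rfl fun a _ => Finset.sum_congr rfl fun b _ => h1 a b
          _ = (1/2) * ((∑ a, ∑ b, sig B w a b * |y' b - y' a|)
              + s * ∑ a, ∑ b, sig B w a b
                * |(if b ∈ T then (1:ℝ) else 0) - (if a ∈ T then 1 else 0)|) := by
              simp only [Finset.sum_add_distrib, Finset.mul_sum]
          _ = (1/2) * ∑ a, ∑ b, sig B w a b * |y' b - y' a|
              + s * ∑ b ∈ T, ∑ a ∈ Tᶜ, sig B w a b := by
              rw [sig_ind_sum B w hanti T]; ring
      rw [hLdec, hRdec, sum_D_zero B w hanti hzero]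
      have hcut := cut_lemma B w hanti hint hzero hsmall T
      have := mul_le_mul_of_nonneg_left hcut (le_of_lt hs)
      linarith

noncomputable def Phi (B : Finset V) (w : V → V → ℝ) (t : V × V → ℝ) :
    EuclideanSpace ℝ V :=
  WithLp.toLp 2 (fun v => ∑ a, sig B w a v * ((t (a, v) - t (v, a)) / 2))

lemma double_sum_pair (F : V → V → ℝ) :
    ∑ a, ∑ b, F a b = (1/2) * ∑ a, ∑ b, (F a b + F b a) := by
  have h2 : ∑ a : V, ∑ b : V, F b a = ∑ a, ∑ b, F a b := Finset.sum_comm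
  simp only [Finset.sum_add_distrib]
  rw [h2]; ring

lemma D_mem (B : Finset V) (w : V → V → ℝ)
    (hanti : ∀ a b, w a b = -w b a)
    (hint : ∀ v ∉ B, ∃ m : ℤ, (∑ a, w a v) = (m : ℝ))
    (hzero : (∑ v ∈ B, ∑ a, w a v) = 0)
    (hsmall : (∑ a ∈ B, ∑ b, |w a b|) < 1) :
    ∃ t : V × V → ℝ, (∀ p, |t p| ≤ 1) ∧ Phi B w t = (WithLp.toLp 2 (DD B w) : EuclideanSpace ℝ V) := by
  classical
  set cube : Set (V × V → ℝ) := Set.univ.pi (fun _ => Set.Icc (-1:ℝ) 1) with hcube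
  set Z : Set (EuclideanSpace ℝ V) := Phi B w '' cube with hZ
  have hcubeC : IsCompact cube := isCompact_univ_pi fun _ => isCompact_Icc
  have hPhiCont : Continuous (Phi B w) := by
    unfold Phi
    refine (PiLp.continuous_toLp 2 (fun _ : V => ℝ)).comp ?_
    apply continuous_pi
    intro v
    refine continuous_finset_sum _ fun a _ => ?_
    exact continuous_const.mul
      (Continuous.div_const ((continuous_apply ((a, v) : V × V)).sub
        (continuous_apply ((v, a) : V × V))) 2)
  have hZC : IsCompact Z := hcubeC.image hPhiCont
  have hPhiAff : ∀ (c d : ℝ) (t1 t2 : V × V → ℝ),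
      Phi B w (c • t1 + d • t2) = c • Phi B w t1 + d • Phi B w t2 := by
    intro c d t1 t2
    ext v
    show (∑ a, sig B w a v * (((c • t1 + d • t2) (a, v) - (c • t1 + d • t2) (v, a)) / 2))
      = c * (∑ a, sig B w a v * ((t1 (a, v) - t1 (v, a)) / 2))
        + d * (∑ a, sig B w a v * ((t2 (a, v) - t2 (v, a)) / 2))
    simp only [Pi.add_apply, Pi.smul_apply, smul_eq_mul, Finset.mul_sum]
    rw [← Finset.sum_add_distrib]
    refine Finset.sum_congr rfl fun a _ => by ring
  have hZconv : Convex ℝ Z := by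
    rintro x ⟨t1, ht1, rfl⟩ y ⟨t2, ht2, rfl⟩ c d hc hd hcd
    refine ⟨c • t1 + d • t2, ?_, hPhiAff c d t1 t2⟩
    intro p _
    have h1 := ht1 p (Set.mem_univ p)
    have h2 := ht2 p (Set.mem_univ p)
    simp only [Set.mem_Icc] at h1 h2 ⊢
    have e1 : c * (-1) ≤ c * t1 p := mul_le_mul_of_nonneg_left h1.1 hc
    have e2 : c * t1 p ≤ c * 1 := mul_le_mul_of_nonneg_left h1.2 hc
    have e3 : d * (-1) ≤ d * t2 p := mul_le_mul_of_nonneg_left h2.1 hd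
    have e4 : d * t2 p ≤ d * 1 := mul_le_mul_of_nonneg_left h2.2 hd
    constructor
    · show -1 ≤ c * t1 p + d * t2 p
      linarith
    · show c * t1 p + d * t2 p ≤ 1
      linarith
  have hZne : Z.Nonempty := ⟨Phi B w 0, 0, fun p _ => by simp, rfl⟩
  set D : EuclideanSpace ℝ V := WithLp.toLp 2 (DD B w : V → ℝ) with hD
  obtain ⟨z0, hz0Z, hz0min⟩ :=
    exists_norm_eq_iInf_of_complete_convex hZne (hZC.isClosed.isComplete) hZconv D
  have hvar : ∀ z ∈ Z, (inner ℝ (D - z0) (z - z0) : ℝ) ≤ 0 :=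
    (norm_eq_iInf_iff_real_inner_le_zero hZconv hz0Z).mp hz0min
  set y : V → ℝ := fun v => (D - z0) v with hy
  -- choose maximizer t*
  set ts : V × V → ℝ := fun p => if y p.1 < y p.2 then 1 else if y p.2 < y p.1 then -1 else 0
    with hts
  have htscube : ts ∈ cube := by
    intro p _
    simp only [Set.mem_Icc, hts]
    split <;> [skip; split] <;> norm_num
  have htsanti : ∀ a b : V, ts (b, a) = -ts (a, b) := by
    intro a b
    simp only [hts]
    rcases lt_trichotomy (y a) (y b) with h | h | h
    · rw [if_neg (not_lt.mpr h.le), if_pos h, if_pos h]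
    · rw [h]; simp
    · rw [if_pos h, if_neg (not_lt.mpr h.le), if_pos h]; norm_num
  -- inner products as sums
  have hinner : ∀ (u z : EuclideanSpace ℝ V), (inner ℝ u z : ℝ) = ∑ v, u v * z v := by
    intro u z
    rw [PiLp.inner_apply]
    simp [RCLike.inner_apply, mul_comm]
  -- ⟪y, Phi ts⟫ = RR y
  have hmax : (inner ℝ (D - z0) (Phi B w ts) : ℝ) = RR B w y := by
    rw [hinner]
    have h1 : ∀ v, (D - z0) v * Phi B w ts v
        = ∑ a, y v * (sig B w a v * ts (a, v)) := by
      intro v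
      show (D - z0) v * (∑ a, sig B w a v * ((ts (a, v) - ts (v, a)) / 2)) = _
      rw [Finset.mul_sum]
      refine Finset.sum_congr rfl fun a _ => ?_
      rw [htsanti v a]
      have : y v = (D - z0) v := rfl
      rw [← this]; ring
    rw [Finset.sum_congr rfl fun v _ => h1 v]
    have hpair : ∑ v, ∑ a, y v * (sig B w a v * ts (a, v))
        = (1/2) * ∑ v, ∑ a, (y v * (sig B w a v * ts (a, v))
            + y a * (sig B w v a * ts (v, a))) :=
      double_sum_pair fun v a => y v * (sig B w a v * ts (a, v))
    rw [hpair]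
    have heach : ∀ v a : V, y v * (sig B w a v * ts (a, v)) + y a * (sig B w v a * ts (v, a))
        = sig B w a v * |y v - y a| := by
      intro v a
      rw [htsanti a v, sig_symm B w hanti v a]
      simp only [hts]
      rcases lt_trichotomy (y a) (y v) with h | h | h
      · rw [if_pos h, abs_of_nonneg (by linarith : (0:ℝ) ≤ y v - y a)]; ring
      · rw [if_neg (not_lt.mpr h.le), if_neg (not_lt.mpr h.ge), h]; simp
      · rw [if_neg (not_lt.mpr h.le), if_pos h, abs_of_nonpos (by linarith : y v - y a ≤ 0)]
        ring
    calc (1/2) * ∑ v, ∑ a, (y v * (sig B w a v * ts (a, v)) + y a * (sig B w v a * ts (v, a)))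
        = (1/2) * ∑ v, ∑ a, sig B w a v * |y v - y a| := by
          congr 1
          exact Finset.sum_congr rfl fun v _ => Finset.sum_congr rfl fun a _ => heach v a
      _ = RR B w y := by
          unfold RR
          congr 1
          exact Finset.sum_comm
  -- conclude
  have hKI := key_ineq B w hanti hint hzero hsmall y
  have hDy : (inner ℝ (D - z0) D : ℝ) = ∑ v, DD B w v * y v := by
    rw [hinner]
    exact Finset.sum_congr rfl fun v _ => by
      have : D v = DD B w v := rfl
      rw [this]; ring
  have hvz := hvar (Phi B w ts) ⟨ts, htscube, rfl⟩
  rw [inner_sub_right] at hvz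
  have hself : (inner ℝ (D - z0) (D - z0) : ℝ) ≤ 0 := by
    rw [inner_sub_right]
    have := hmax
    linarith [hKI, hDy, hvz, hmax]
  have hDz : D - z0 = 0 := real_inner_self_nonpos.mp hself
  have hDeq : D = z0 := by
    have := sub_eq_zero.mp hDz; exact this
  obtain ⟨t, htc, htPhi⟩ := hz0Z
  refine ⟨t, ?_, ?_⟩
  · intro p
    have := htc p (Set.mem_univ p)
    simp only [Set.mem_Icc] at this
    exact abs_le.mpr this
  · rw [htPhi, ← hDeq]




/-- Proposition 2.6, existence of a saturating X̄-flow: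
Let `V` be a finite vertex set with a distinguished boundary set `B`, and
`w` an antisymmetric real weight function (edges being the support of `w`), such that
(i) every vertex outside `B` has integer flux, (ii) the total flux through `B` is zero,
(iii) at each vertex outside `B` all incident weights have the same sign, and
(iv) the total absolute weight of edges incident to `B` is `< 1`. Then there exists an
antisymmetric flow `f` with `|f| ≤ |w|` edgewise, conserving flux at every vertex
outside `B`, and saturating `B`, i.e. `f = w` on every edge with an endpoint in `B`. -/
theorem exists_saturating_Xbar_flow {V : Type} [Fintype V] [DecidableEq V]
    (B : Finset V) (w : V → V → ℝ)
    (hanti : ∀ a b, w a b = -w b a)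
    (hint : ∀ v ∉ B, ∃ m : ℤ, (∑ a, w a v) = (m : ℝ))
    (hzero : (∑ v ∈ B, ∑ a, w a v) = 0)
    (hsign : ∀ v ∉ B, ∀ a b, 0 ≤ w a v * w b v)
    (hsmall : (∑ a ∈ B, ∑ b, |w a b|) < 1) :
    ∃ f : V → V → ℝ,
      (∀ a b, f a b = -f b a) ∧
      (∀ a b, |f a b| ≤ |w a b|) ∧
      (∀ v ∉ B, (∑ a, f a v) = 0) ∧
      (∀ a b, a ∈ B ∨ b ∈ B → f a b = w a b) := by
  classical
  obtain ⟨t, htabs, htPhi⟩ := D_mem B w hanti hint hzero hsmall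
  set g : V → V → ℝ := fun a b => sig B w a b * ((t (a, b) - t (b, a)) / 2) with hg
  have hgdiv : ∀ v, ∑ a, g a v = DD B w v := fun v => by
    have := congrArg (fun x : EuclideanSpace ℝ V => x v) htPhi; exact this
  have hganti : ∀ a b, g a b = -g b a := by
    intro a b
    simp only [hg]
    rw [sig_symm B w hanti a b]
    ring
  have hgabs : ∀ a b, |g a b| ≤ sig B w a b := by
    intro a b
    simp only [hg]
    rw [abs_mul, abs_of_nonneg (sig_nonneg B w a b)]
    have ha := abs_le.mp (htabs (a, b))
    have hb := abs_le.mp (htabs (b, a))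
    have h1 : |(t (a, b) - t (b, a)) / 2| ≤ 1 :=
      abs_le.mpr ⟨by linarith, by linarith⟩
    calc sig B w a b * |(t (a, b) - t (b, a)) / 2| ≤ sig B w a b * 1 :=
          mul_le_mul_of_nonneg_left h1 (sig_nonneg B w a b)
      _ = sig B w a b := mul_one _
  refine ⟨fun a b => if a ∈ B ∨ b ∈ B then w a b else g a b, ?_, ?_, ?_, ?_⟩
  · intro a b
    by_cases h : a ∈ B ∨ b ∈ B
    · simp only [if_pos h, if_pos (Or.symm h)]
      exact hanti a b
    · simp only [if_neg h, if_neg (fun hh => h (Or.symm hh))]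
      exact hganti a b
  · intro a b
    by_cases h : a ∈ B ∨ b ∈ B
    · simp only [if_pos h, le_refl]
    · simp only [if_neg h]
      have h1 := hgabs a b
      have h2 : sig B w a b = |w a b| := by unfold sig; rw [if_neg h]
      rw [h2] at h1
      exact h1
  · intro v hv
    have hsplit : (∑ a, if a ∈ B ∨ v ∈ B then w a v else g a v)
        = ∑ a ∈ B, (if a ∈ B ∨ v ∈ B then w a v else g a v)
          + ∑ a ∈ Bᶜ, (if a ∈ B ∨ v ∈ B then w a v else g a v) :=
      (Finset.sum_add_sum_compl B _).symm
    rw [hsplit]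
    have h1 : ∑ a ∈ B, (if a ∈ B ∨ v ∈ B then w a v else g a v) = ∑ a ∈ B, w a v :=
      Finset.sum_congr rfl fun a ha => if_pos (Or.inl ha)
    have h2 : ∑ a ∈ Bᶜ, (if a ∈ B ∨ v ∈ B then w a v else g a v) = ∑ a ∈ Bᶜ, g a v :=
      Finset.sum_congr rfl fun a ha => by
        rw [if_neg]
        push_neg
        exact ⟨Finset.mem_compl.mp ha, hv⟩
    have h3 : ∑ a ∈ Bᶜ, g a v = ∑ a, g a v := by
      rw [← Finset.sum_add_sum_compl B (fun a => g a v)]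
      have h0 : ∑ a ∈ B, g a v = 0 := Finset.sum_eq_zero fun a ha => by
        simp only [hg]
        unfold sig
        rw [if_pos (Or.inl ha)]
        ring
      rw [h0, zero_add]
    rw [h1, h2, h3, hgdiv v]
    unfold DD
    rw [if_neg hv]
    ring
  · intro a b h
    exact if_pos h
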